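/- The optimization problems min ‖w‖² subject to ‖h_i^H w‖²/σ_i² ≥ γ_i for all i (Problem 1) and min ‖t(w)·w‖² over nonzero w with t(w) = max_i sqrt(γ_i σ_i²/‖h_i^H w‖²) (Problem 2) have the same optimal value: the infimum of ‖w‖² over the feasible set of Problem 1 equals the infimum of ‖t(w)·w‖² over all w with ‖h_i^H w‖ > 0 for all i. -/

import Mathlib

open Matrix

theorem stmt4 (N M : ℕ) (hM : 0 < M) (h : Fin M → EuclideanSpace ℂ (Fin N))
    (σ γ : Fin M → ℝ) (hσ : ∀ i, 0 < σ i) (hγ : ∀ i, 0 < γ i)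
    (hne : ∃ w : EuclideanSpace ℂ (Fin N),
      ∀ i, γ i * σ i ^ 2 ≤ ‖(inner ℂ (h i) w : ℂ)‖ ^ 2) :
    sInf {r : ℝ | ∃ w : EuclideanSpace ℂ (Fin N),
        (∀ i, γ i * σ i ^ 2 ≤ ‖(inner ℂ (h i) w : ℂ)‖ ^ 2) ∧ r = ‖w‖ ^ 2} =
    sInf {r : ℝ | ∃ w : EuclideanSpace ℂ (Fin N),
        (∀ i, 0 < ‖(inner ℂ (h i) w : ℂ)‖) ∧
        r = ‖(Finset.univ.sup' ⟨⟨0, hM⟩, Finset.mem_univ _⟩ (fun i => Real.sqrt (γ i * σ i ^ 2 / ‖(inner ℂ (h i) w : ℂ)‖ ^ 2))) • w‖ ^ 2} := by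
  set i0 : Fin M := ⟨0, hM⟩
  set S1 := {r : ℝ | ∃ w : EuclideanSpace ℂ (Fin N),
        (∀ i, γ i * σ i ^ 2 ≤ ‖(inner ℂ (h i) w : ℂ)‖ ^ 2) ∧ r = ‖w‖ ^ 2} with hS1
  set S2 := {r : ℝ | ∃ w : EuclideanSpace ℂ (Fin N),
        (∀ i, 0 < ‖(inner ℂ (h i) w : ℂ)‖) ∧
        r = ‖(Finset.univ.sup' ⟨i0, Finset.mem_univ _⟩ (fun i => Real.sqrt (γ i * σ i ^ 2 / ‖(inner ℂ (h i) w : ℂ)‖ ^ 2))) • w‖ ^ 2} with hS2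
  -- positive γσ²
  have hpos : ∀ i, 0 < γ i * σ i ^ 2 := fun i => mul_pos (hγ i) (pow_pos (hσ i) 2)
  -- feasible implies positive inner norms
  have hfeas_pos : ∀ w : EuclideanSpace ℂ (Fin N),
      (∀ i, γ i * σ i ^ 2 ≤ ‖(inner ℂ (h i) w : ℂ)‖ ^ 2) → ∀ i, 0 < ‖(inner ℂ (h i) w : ℂ)‖ := by
    intro w hw i
    by_contra hn
    push_neg at hn
    have h0 : ‖(inner ℂ (h i) w : ℂ)‖ = 0 := le_antisymm hn (norm_nonneg _)
    have := hw i
    rw [h0] at this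
    nlinarith [hpos i]
  have hbdd1 : BddBelow S1 := ⟨0, fun r ⟨w, _, hr⟩ => hr ▸ sq_nonneg ‖w‖⟩
  have hbdd2 : BddBelow S2 := ⟨0, fun r ⟨w, _, hr⟩ => hr ▸ sq_nonneg _⟩
  obtain ⟨w0, hw0⟩ := hne
  have hne1 : S1.Nonempty := ⟨‖w0‖ ^ 2, w0, hw0, rfl⟩
  -- sup' properties
  have key : ∀ w : EuclideanSpace ℂ (Fin N), (∀ i, 0 < ‖(inner ℂ (h i) w : ℂ)‖) →
      let c := Finset.univ.sup' ⟨i0, Finset.mem_univ _⟩ (fun i => Real.sqrt (γ i * σ i ^ 2 / ‖(inner ℂ (h i) w : ℂ)‖ ^ 2))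
      0 < c ∧ ∀ i, γ i * σ i ^ 2 ≤ ‖(inner ℂ (h i) (c • w) : ℂ)‖ ^ 2 := by
    intro w hw
    set c := Finset.univ.sup' ⟨i0, Finset.mem_univ _⟩ (fun i => Real.sqrt (γ i * σ i ^ 2 / ‖(inner ℂ (h i) w : ℂ)‖ ^ 2)) with hc
    have hcpos : 0 < c := by
      have h0 : 0 < Real.sqrt (γ i0 * σ i0 ^ 2 / ‖(inner ℂ (h i0) w : ℂ)‖ ^ 2) :=
        Real.sqrt_pos.mpr (div_pos (hpos i0) (pow_pos (hw i0) 2))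
      exact lt_of_lt_of_le h0 (Finset.le_sup' (fun i => Real.sqrt (γ i * σ i ^ 2 / ‖(inner ℂ (h i) w : ℂ)‖ ^ 2)) (Finset.mem_univ i0))
    refine ⟨hcpos, fun i => ?_⟩
    have hle : Real.sqrt (γ i * σ i ^ 2 / ‖(inner ℂ (h i) w : ℂ)‖ ^ 2) ≤ c :=
      Finset.le_sup' (fun i => Real.sqrt (γ i * σ i ^ 2 / ‖(inner ℂ (h i) w : ℂ)‖ ^ 2)) (Finset.mem_univ i)
    have hin : ‖(inner ℂ (h i) (c • w) : ℂ)‖ = c * ‖(inner ℂ (h i) w : ℂ)‖ := by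
      rw [RCLike.real_smul_eq_coe_smul (K := ℂ) c w]
      rw [inner_smul_right]
      simp [norm_mul, Complex.norm_real, abs_of_pos hcpos]
    rw [hin, mul_pow]
    have hsq : γ i * σ i ^ 2 / ‖(inner ℂ (h i) w : ℂ)‖ ^ 2 ≤ c ^ 2 := by
      have := Real.sq_sqrt (le_of_lt (div_pos (hpos i) (pow_pos (hw i) 2)))
      nlinarith [Real.sqrt_nonneg (γ i * σ i ^ 2 / ‖(inner ℂ (h i) w : ℂ)‖ ^ 2)]
    calc γ i * σ i ^ 2 = (γ i * σ i ^ 2 / ‖(inner ℂ (h i) w : ℂ)‖ ^ 2) * ‖(inner ℂ (h i) w : ℂ)‖ ^ 2 :=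
          (div_mul_cancel₀ _ (ne_of_gt (pow_pos (hw i) 2))).symm
      _ ≤ c ^ 2 * ‖(inner ℂ (h i) w : ℂ)‖ ^ 2 := by
          exact mul_le_mul_of_nonneg_right hsq (sq_nonneg _)
  apply le_antisymm
  · -- sInf S1 ≤ sInf S2 : S2 ⊆ S1
    apply le_csInf
    · exact ⟨‖(Finset.univ.sup' ⟨i0, Finset.mem_univ _⟩ (fun i => Real.sqrt (γ i * σ i ^ 2 / ‖(inner ℂ (h i) w0 : ℂ)‖ ^ 2))) • w0‖ ^ 2, w0, hfeas_pos w0 hw0, rfl⟩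
    · rintro r ⟨w, hw, rfl⟩
      obtain ⟨hcpos, hfeas⟩ := key w hw
      exact csInf_le hbdd1 ⟨_, hfeas, rfl⟩
  · -- sInf S2 ≤ sInf S1
    apply le_csInf hne1
    rintro r ⟨w, hw, rfl⟩
    have hwpos := hfeas_pos w hw
    set c := Finset.univ.sup' ⟨i0, Finset.mem_univ _⟩ (fun i => Real.sqrt (γ i * σ i ^ 2 / ‖(inner ℂ (h i) w : ℂ)‖ ^ 2)) with hc
    have hc1 : c ≤ 1 := by
      apply Finset.sup'_le
      intro i _
      rw [show (1:ℝ) = Real.sqrt 1 from (Real.sqrt_one).symm]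
      apply Real.sqrt_le_sqrt
      rw [div_le_one (pow_pos (hwpos i) 2)]
      exact hw i
    have hc0 : 0 ≤ c := le_of_lt (key w hwpos).1
    have : ‖c • w‖ ^ 2 ≤ ‖w‖ ^ 2 := by
      rw [norm_smul, Real.norm_eq_abs, abs_of_nonneg hc0, mul_pow]
      have hc2 : c ^ 2 ≤ 1 := by nlinarith
      nlinarith [sq_nonneg ‖w‖, hc2]
    exact le_trans (csInf_le hbdd2 ⟨w, hwpos, rfl⟩) this
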